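/- Let t ≥ 2 and let p, q, r ≥ 0 be integers with r > t. Then every K_{2,r}^{p,q}-free graph G on n vertices satisfies 𝒩(K_{2,t}, G) ≤ binom(n,2)·binom(r−1,t) + n·(p+q+r)·binom(p+q+r,t). -/

import Mathlib

open SimpleGraph Finset

/-- `G` contains a copy of `F`, i.e. `G` has a subgraph isomorphic to `F`. -/
def ContainsCopy {α β : Type*} (F : SimpleGraph α) (G : SimpleGraph β) : Prop :=
  ∃ f : α → β, Function.Injective f ∧ ∀ ⦃a b⦄, F.Adj a b → G.Adj (f a) (f b)

/-- `G` is `F`-free: it contains no subgraph isomorphic to `F`. -/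
def IsFFree {α β : Type*} (F : SimpleGraph α) (G : SimpleGraph β) : Prop :=
  ¬ ContainsCopy F G

/-- `𝒩(H,G)`: the number of subgraphs of `G` isomorphic to `H`. -/
noncomputable def copyCount {α β : Type*} (H : SimpleGraph α) (G : SimpleGraph β) : ℕ :=
  Nat.card {G' : G.Subgraph // Nonempty (G'.coe ≃g H)}

/-- The number of embeddings of `H` into `G` (injective, edge-preserving maps). -/
noncomputable def embCount {α β : Type*} (H : SimpleGraph α) (G : SimpleGraph β) : ℕ :=
  Nat.card {f : α → β // Function.Injective f ∧ ∀ ⦃a b⦄, H.Adj a b → G.Adj (f a) (f b)}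

/-- `ex(n,H,F)`: the maximum number of copies of `H` in an `F`-free graph on `n` vertices. -/
noncomputable def exNum {α β : Type*} (n : ℕ) (H : SimpleGraph α) (F : SimpleGraph β) : ℕ :=
  sSup {k | ∃ G : SimpleGraph (Fin n), IsFFree F G ∧ copyCount H G = k}

/-- The defining relation of `K_{2,r}^{p,q}`: the two vertices `u = inl 0`, `v = inl 1` of the
small side, `r` vertices joined to both, `p` vertices joined only to `u`, `q` vertices joined
only to `v`. -/
def K2rpqRel (p q r : ℕ) :
    (Fin 2 ⊕ (Fin r ⊕ Fin p ⊕ Fin q)) → (Fin 2 ⊕ (Fin r ⊕ Fin p ⊕ Fin q)) → Prop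
  | Sum.inl _, Sum.inr (Sum.inl _) => True
  | Sum.inl i, Sum.inr (Sum.inr (Sum.inl _)) => i = 0
  | Sum.inl i, Sum.inr (Sum.inr (Sum.inr _)) => i = 1
  | _, _ => False

/-- The graph `K_{2,r}^{p,q}` obtained from `K_{2,r}` by adding `p` pendant vertices at `u`
and `q` pendant vertices at `v`, where `u,v` form the side of size 2. -/
def K2rpq (p q r : ℕ) : SimpleGraph (Fin 2 ⊕ (Fin r ⊕ Fin p ⊕ Fin q)) :=
  SimpleGraph.fromRel (K2rpqRel p q r)

/-- The final set `B` of the greedy partition process: start with `B` the set of vertices of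
degree `≠ 2`, and repeatedly move to `A` any non-leaf vertex of `B` with at most two neighbors
in `B`.  The result is the largest subset `S` of the initial `B` in which every non-leaf vertex
has at least three neighbors inside `S`. -/
def finalB {V : Type*} [Fintype V] (T : SimpleGraph V) [DecidableRel T.Adj] : Set V :=
  {v | ∃ S : Set V, v ∈ S ∧ (∀ u ∈ S, T.degree u ≠ 2) ∧
    (∀ u ∈ S, T.degree u ≠ 1 → 3 ≤ Nat.card {w : V // w ∈ S ∧ T.Adj u w})}

/-- A tree is nice if it has at least 3 vertices and every vertex of the final set `B` is a
leaf. -/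
def IsNice {V : Type*} [Fintype V] (T : SimpleGraph V) [DecidableRel T.Adj] : Prop :=
  3 ≤ Fintype.card V ∧ ∀ v ∈ finalB T, T.degree v = 1

/-- The graph on `Fin n` consisting of `⌊n/m⌋` pairwise disjoint copies of `K_m`
(on consecutive blocks of `m` vertices) together with `n - m⌊n/m⌋` isolated vertices. -/
def cliqueBlocks (n m : ℕ) : SimpleGraph (Fin n) :=
  SimpleGraph.fromRel (fun a b =>
    (a : ℕ) / m = (b : ℕ) / m ∧ (a : ℕ) < m * (n / m) ∧ (b : ℕ) < m * (n / m))


/-- Common neighbors of all vertices in `s`. -/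
def commonNbrs {n : ℕ} (G : SimpleGraph (Fin n)) [DecidableRel G.Adj]
    (s : Finset (Fin n)) : Finset (Fin n) :=
  univ.filter (fun x => ∀ a ∈ s, G.Adj a x)

lemma mem_commonNbrs {n : ℕ} {G : SimpleGraph (Fin n)} [DecidableRel G.Adj]
    {s : Finset (Fin n)} {x : Fin n} :
    x ∈ commonNbrs G s ↔ ∀ a ∈ s, G.Adj a x := by
  simp [commonNbrs]

lemma lemA {n p q r : ℕ} (G : SimpleGraph (Fin n)) [DecidableRel G.Adj]
    (hfree : IsFFree (K2rpq p q r) G) (u v : Fin n) (huv : u ≠ v)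
    (h : r ≤ (commonNbrs G {u, v}).card) :
    G.degree u ≤ p + q + r ∨ G.degree v ≤ p + q + r := by
  by_contra hc
  push_neg at hc
  obtain ⟨hu, hv⟩ := hc
  obtain ⟨W, hWsub, hWcard⟩ := Finset.exists_subset_card_eq h
  have hWadj : ∀ x ∈ W, G.Adj u x ∧ G.Adj v x := by
    intro x hx
    have := mem_commonNbrs.mp (hWsub hx)
    exact ⟨this u (by simp), this v (by simp)⟩
  have hdegv : G.degree v = (G.neighborFinset v).card := rfl
  have hdegu : G.degree u = (G.neighborFinset u).card := rfl
  have hQex : q ≤ ((G.neighborFinset v) \ (W ∪ {u})).card := by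
    have h1 := Finset.le_card_sdiff (W ∪ {u}) (G.neighborFinset v)
    have h2 : (W ∪ {u}).card ≤ r + 1 :=
      le_trans (Finset.card_union_le _ _) (by simp [hWcard])
    omega
  obtain ⟨Q, hQsub, hQcard⟩ := Finset.exists_subset_card_eq hQex
  have hPex : p ≤ ((G.neighborFinset u) \ (W ∪ Q ∪ {v})).card := by
    have h1 := Finset.le_card_sdiff (W ∪ Q ∪ {v}) (G.neighborFinset u)
    have h2 : (W ∪ Q ∪ {v}).card ≤ r + q + 1 := by
      refine le_trans (Finset.card_union_le _ _) ?_
      have := Finset.card_union_le W Q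
      simp only [Finset.card_singleton]
      omega
    omega
  obtain ⟨P, hPsub, hPcard⟩ := Finset.exists_subset_card_eq hPex
  -- membership facts
  have hQmem : ∀ x ∈ Q, G.Adj v x ∧ x ∉ W ∧ x ≠ u := by
    intro x hx
    have := hQsub hx
    rw [Finset.mem_sdiff, Finset.mem_union, Finset.mem_singleton] at this
    exact ⟨(SimpleGraph.mem_neighborFinset _ _ _).mp this.1, fun hw => this.2 (Or.inl hw),
      fun he => this.2 (Or.inr he)⟩
  have hPmem : ∀ x ∈ P, G.Adj u x ∧ x ∉ W ∧ x ∉ Q ∧ x ≠ v := by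
    intro x hx
    have := hPsub hx
    rw [Finset.mem_sdiff, Finset.mem_union, Finset.mem_union, Finset.mem_singleton] at this
    exact ⟨(SimpleGraph.mem_neighborFinset _ _ _).mp this.1,
      fun hw => this.2 (Or.inl (Or.inl hw)), fun hq => this.2 (Or.inl (Or.inr hq)),
      fun he => this.2 (Or.inr he)⟩
  have huW : u ∉ W := fun hx => G.irrefl (hWadj u hx).1
  have hvW : v ∉ W := fun hx => G.irrefl (hWadj v hx).2
  have huQ : u ∉ Q := fun hx => (hQmem u hx).2.2 rfl
  have hvQ : v ∉ Q := fun hx => G.irrefl (hQmem v hx).1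
  have huP : u ∉ P := fun hx => G.irrefl (hPmem u hx).1
  have hvP : v ∉ P := fun hx => (hPmem v hx).2.2.2 rfl
  let eW := W.orderIsoOfFin hWcard
  let eP := P.orderIsoOfFin hPcard
  let eQ := Q.orderIsoOfFin hQcard
  set f : (Fin 2 ⊕ (Fin r ⊕ Fin p ⊕ Fin q)) → Fin n :=
    Sum.elim (fun i => if i = 0 then u else v)
      (Sum.elim (fun i => (eW i : Fin n))
        (Sum.elim (fun i => (eP i : Fin n)) (fun i => (eQ i : Fin n)))) with hf
  have h2 : ∀ i : Fin 2, i = 0 ∨ i = 1 := by decide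
  have hWm : ∀ i, (eW i : Fin n) ∈ W := fun i => (eW i).2
  have hPm : ∀ i, (eP i : Fin n) ∈ P := fun i => (eP i).2
  have hQm : ∀ i, (eQ i : Fin n) ∈ Q := fun i => (eQ i).2
  have h10 : (1 : Fin 2) ≠ 0 := by decide
  apply hfree
  refine ⟨f, ?_, ?_⟩
  · -- injective
    intro a b hab
    rcases a with i | w | pp | qq <;> rcases b with j | w' | pp' | qq' <;>
      simp only [hf, Sum.elim_inl, Sum.elim_inr] at hab
    · rcases h2 i with hi | hi <;> rcases h2 j with hj | hj <;> subst hi <;> subst hj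
      · rfl
      · rw [if_pos rfl, if_neg h10] at hab; exact absurd hab huv
      · rw [if_pos rfl, if_neg h10] at hab; exact absurd hab.symm huv
      · rfl
    · exfalso; split_ifs at hab
      · exact huW (hab ▸ hWm w')
      · exact hvW (hab ▸ hWm w')
    · exfalso; split_ifs at hab
      · exact huP (hab ▸ hPm pp')
      · exact hvP (hab ▸ hPm pp')
    · exfalso; split_ifs at hab
      · exact huQ (hab ▸ hQm qq')
      · exact hvQ (hab ▸ hQm qq')
    · exfalso; split_ifs at hab
      · exact huW (hab.symm ▸ hWm w)
      · exact hvW (hab.symm ▸ hWm w)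
    · have : eW w = eW w' := Subtype.ext hab
      rw [eW.injective this]
    · exfalso; exact (hPmem _ (hPm pp')).2.1 (hab ▸ hWm w)
    · exfalso; exact (hQmem _ (hQm qq')).2.1 (hab ▸ hWm w)
    · exfalso; split_ifs at hab
      · exact huP (hab.symm ▸ hPm pp)
      · exact hvP (hab.symm ▸ hPm pp)
    · exfalso; exact (hPmem _ (hPm pp)).2.1 (hab.symm ▸ hWm w')
    · have : eP pp = eP pp' := Subtype.ext hab
      rw [eP.injective this]
    · exfalso; exact (hPmem _ (hPm pp)).2.2.1 (hab.symm ▸ hQm qq')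
    · exfalso; split_ifs at hab
      · exact huQ (hab.symm ▸ hQm qq)
      · exact hvQ (hab.symm ▸ hQm qq)
    · exfalso; exact (hQmem _ (hQm qq)).2.1 (hab.symm ▸ hWm w')
    · exfalso; exact (hPmem _ (hPm pp')).2.2.1 (hab ▸ hQm qq)
    · have : eQ qq = eQ qq' := Subtype.ext hab
      rw [eQ.injective this]
  · -- adjacency preserving
    intro a b hadj
    rw [K2rpq, SimpleGraph.fromRel_adj] at hadj
    obtain ⟨hne, hrel⟩ := hadj
    rcases a with i | w | pp | qq <;> rcases b with j | w' | pp' | qq' <;>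
      simp only [hf, Sum.elim_inl, Sum.elim_inr] <;>
      simp only [K2rpqRel] at hrel
    · exact absurd hrel (by simp)
    · rcases h2 i with hi | hi <;> subst hi
      · rw [if_pos rfl]; exact (hWadj _ (hWm w')).1
      · rw [if_neg h10]; exact (hWadj _ (hWm w')).2
    · have hi : i = 0 := by tauto
      subst hi; rw [if_pos rfl]; exact (hPmem _ (hPm pp')).1
    · have hi : i = 1 := by tauto
      subst hi; rw [if_neg h10]; exact (hQmem _ (hQm qq')).1
    · rcases h2 j with hj | hj <;> subst hj
      · rw [if_pos rfl]; exact ((hWadj _ (hWm w)).1).symm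
      · rw [if_neg h10]; exact ((hWadj _ (hWm w)).2).symm
    · exact absurd hrel (by simp)
    · exact absurd hrel (by simp)
    · exact absurd hrel (by simp)
    · have hj : j = 0 := by tauto
      subst hj; rw [if_pos rfl]; exact ((hPmem _ (hPm pp)).1).symm
    · exact absurd hrel (by simp)
    · exact absurd hrel (by simp)
    · exact absurd hrel (by simp)
    · have hj : j = 1 := by tauto
      subst hj; rw [if_neg h10]; exact ((hQmem _ (hQm qq)).1).symm
    · exact absurd hrel (by simp)
    · exact absurd hrel (by simp)
    · exact absurd hrel (by simp)

section Char
variable {n t : ℕ} {G : SimpleGraph (Fin n)}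

/-- The two-side image of a `K_{2,t}`-subgraph. -/
noncomputable def sideA (G' : G.Subgraph)
    (e : G'.coe ≃g completeBipartiteGraph (Fin 2) (Fin t)) : Finset (Fin n) :=
  (univ : Finset (Fin 2)).image fun i => ((e.symm (Sum.inl i)) : Fin n)

noncomputable def sideB (G' : G.Subgraph)
    (e : G'.coe ≃g completeBipartiteGraph (Fin 2) (Fin t)) : Finset (Fin n) :=
  (univ : Finset (Fin t)).image fun j => ((e.symm (Sum.inr j)) : Fin n)

lemma copy_char (G' : G.Subgraph)
    (e : G'.coe ≃g completeBipartiteGraph (Fin 2) (Fin t)) :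
    G'.verts = ↑(sideA G' e) ∪ ↑(sideB G' e) ∧
      ∀ x y, G'.Adj x y ↔
        ((x ∈ sideA G' e ∧ y ∈ sideB G' e) ∨ (y ∈ sideA G' e ∧ x ∈ sideB G' e)) := by
  have hmemA : ∀ x, x ∈ sideA G' e ↔ ∃ i, ((e.symm (Sum.inl i)) : Fin n) = x := by
    intro x; simp [sideA]
  have hmemB : ∀ x, x ∈ sideB G' e ↔ ∃ j, ((e.symm (Sum.inr j)) : Fin n) = x := by
    intro x; simp [sideB]
  constructor
  · ext x
    constructor
    · intro hx
      rcases hc : e ⟨x, hx⟩ with i | j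
      · left
        rw [Finset.mem_coe, hmemA]
        exact ⟨i, by rw [← hc, e.symm_apply_apply]⟩
      · right
        rw [Finset.mem_coe, hmemB]
        exact ⟨j, by rw [← hc, e.symm_apply_apply]⟩
    · intro hx
      rcases hx with hx | hx
      · obtain ⟨i, hi⟩ := (hmemA x).mp hx
        exact hi ▸ (e.symm (Sum.inl i)).2
      · obtain ⟨j, hj⟩ := (hmemB x).mp hx
        exact hj ▸ (e.symm (Sum.inr j)).2
  · intro x y
    constructor
    · intro hxy
      have hx : x ∈ G'.verts := G'.edge_vert hxy
      have hy : y ∈ G'.verts := G'.edge_vert hxy.symm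
      have hcoe : G'.coe.Adj ⟨x, hx⟩ ⟨y, hy⟩ := hxy
      have hK : (completeBipartiteGraph (Fin 2) (Fin t)).Adj (e ⟨x, hx⟩) (e ⟨y, hy⟩) :=
        e.map_adj_iff.mpr hcoe
      rcases hcx : e ⟨x, hx⟩ with i | j <;> rcases hcy : e ⟨y, hy⟩ with i' | j' <;>
        rw [hcx, hcy] at hK <;> simp only [completeBipartiteGraph_adj] at hK
      · simp at hK
      · left
        refine ⟨(hmemA x).mpr ⟨i, by rw [← hcx, e.symm_apply_apply]⟩,
          (hmemB y).mpr ⟨j', by rw [← hcy, e.symm_apply_apply]⟩⟩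
      · right
        refine ⟨(hmemA y).mpr ⟨i', by rw [← hcy, e.symm_apply_apply]⟩,
          (hmemB x).mpr ⟨j, by rw [← hcx, e.symm_apply_apply]⟩⟩
      · simp at hK
    · intro h
      have key : ∀ a b, a ∈ sideA G' e → b ∈ sideB G' e → G'.Adj a b := by
        intro a b ha hb
        obtain ⟨i, hi⟩ := (hmemA a).mp ha
        obtain ⟨j, hj⟩ := (hmemB b).mp hb
        have hK : (completeBipartiteGraph (Fin 2) (Fin t)).Adj (Sum.inl i) (Sum.inr j) := by
          simp
        have hcoe : G'.coe.Adj (e.symm (Sum.inl i)) (e.symm (Sum.inr j)) :=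
          e.symm.map_adj_iff.mpr hK
        have : G'.Adj ((e.symm (Sum.inl i)) : Fin n) ((e.symm (Sum.inr j)) : Fin n) := hcoe
        rwa [hi, hj] at this
      rcases h with ⟨hx, hy⟩ | ⟨hy, hx⟩
      · exact key _ _ hx hy
      · exact (key _ _ hy hx).symm

lemma step1 [DecidableRel G.Adj] :
    _root_.copyCount (completeBipartiteGraph (Fin 2) (Fin t)) G ≤
      ((((univ : Finset (Fin n)).powersetCard 2) ×ˢ ((univ : Finset (Fin n)).powersetCard t)).filter
        (fun AB => ∀ a ∈ AB.1, ∀ b ∈ AB.2, G.Adj a b)).card := by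
  classical
  set Y := ((((univ : Finset (Fin n)).powersetCard 2) ×ˢ ((univ : Finset (Fin n)).powersetCard t)).filter
        (fun AB => ∀ a ∈ AB.1, ∀ b ∈ AB.2, G.Adj a b)) with hY
  rw [_root_.copyCount]
  have : Nat.card {G' : G.Subgraph // Nonempty (G'.coe ≃g completeBipartiteGraph (Fin 2) (Fin t))}
      ≤ Nat.card {AB // AB ∈ Y} := by
    refine Nat.card_le_card_of_injective
      (fun s => ⟨(sideA s.1 (Classical.choice s.2), sideB s.1 (Classical.choice s.2)), ?_⟩) ?_
    · set e := Classical.choice s.2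
      rw [hY, Finset.mem_filter, Finset.mem_product, Finset.mem_powersetCard,
        Finset.mem_powersetCard]
      refine ⟨⟨⟨Finset.subset_univ _, ?_⟩, ⟨Finset.subset_univ _, ?_⟩⟩, ?_⟩
      · rw [sideA, Finset.card_image_of_injective _ ?_, Finset.card_univ, Fintype.card_fin]
        intro i j hij
        exact Sum.inl_injective (e.symm.injective (Subtype.ext hij))
      · rw [sideB, Finset.card_image_of_injective _ ?_, Finset.card_univ, Fintype.card_fin]
        intro i j hij
        exact Sum.inr_injective (e.symm.injective (Subtype.ext hij))
      · intro a ha b hb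
        exact s.1.adj_sub (((copy_char s.1 e).2 a b).mpr (Or.inl ⟨ha, hb⟩))
    · intro s₁ s₂ hs
      simp only [Subtype.mk.injEq, Prod.mk.injEq] at hs
      obtain ⟨hA, hB⟩ := hs
      have c₁ := copy_char s₁.1 (Classical.choice s₁.2)
      have c₂ := copy_char s₂.1 (Classical.choice s₂.2)
      have : s₁.1 = s₂.1 := by
        apply SimpleGraph.Subgraph.ext
        · rw [c₁.1, c₂.1, hA, hB]
        · ext x y
          rw [c₁.2 x y, c₂.2 x y, hA, hB]
      exact Subtype.ext this
  refine le_trans this ?_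
  rw [Nat.card_eq_fintype_card, Fintype.card_coe]

lemma pair_bound {n p q r : ℕ} (G : SimpleGraph (Fin n)) [DecidableRel G.Adj]
    (hfree : IsFFree (K2rpq p q r) G) {x y : Fin n} (hxy : x ≠ y) :
    (commonNbrs G {x, y}).card ≤ p + q + r := by
  by_cases h : r ≤ (commonNbrs G {x, y}).card
  · have hsubx : commonNbrs G {x, y} ⊆ G.neighborFinset x := by
      intro b hb
      rw [SimpleGraph.mem_neighborFinset]
      exact mem_commonNbrs.mp hb x (by simp)
    have hsuby : commonNbrs G {x, y} ⊆ G.neighborFinset y := by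
      intro b hb
      rw [SimpleGraph.mem_neighborFinset]
      exact mem_commonNbrs.mp hb y (by simp)
    rcases lemA G hfree x y hxy h with hdx | hdy
    · exact le_trans (Finset.card_le_card hsubx) hdx
    · exact le_trans (Finset.card_le_card hsuby) hdy
  · omega

end Char

theorem stmt12 (t p q r n : ℕ) (ht : 2 ≤ t) (hr : t < r)
    (G : SimpleGraph (Fin n)) (hfree : IsFFree (K2rpq p q r) G) :
    _root_.copyCount (completeBipartiteGraph (Fin 2) (Fin t)) G ≤
      Nat.choose n 2 * Nat.choose (r - 1) t +
        n * (p + q + r) * Nat.choose (p + q + r) t := by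
  classical
  refine le_trans step1 ?_
  set d := p + q + r with hd
  set Y := ((((univ : Finset (Fin n)).powersetCard 2) ×ˢ
      ((univ : Finset (Fin n)).powersetCard t)).filter
      (fun AB => ∀ a ∈ AB.1, ∀ b ∈ AB.2, G.Adj a b)) with hY
  have hpair : ∀ x y : Fin n, x ≠ y → (commonNbrs G {x, y}).card ≤ d :=
    fun x y hxy => pair_bound G hfree hxy
  have hlow : ∀ x y : Fin n, x ≠ y → r ≤ (commonNbrs G {x, y}).card →
      G.degree x ≤ d ∨ G.degree y ≤ d :=
    fun x y hxy h => lemA G hfree x y hxy h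
  have hsplit := Finset.card_filter_add_card_filter_not
    (s := Y) (p := fun AB => (commonNbrs G AB.1).card ≤ r - 1)
  set Yg := Y.filter (fun AB => (commonNbrs G AB.1).card ≤ r - 1) with hYg
  set Yb := Y.filter (fun AB => ¬ (commonNbrs G AB.1).card ≤ r - 1) with hYb
  -- good part
  have hgood : Yg.card ≤ n.choose 2 * (r - 1).choose t := by
    have hsub : Yg ⊆ (((univ : Finset (Fin n)).powersetCard 2).filter
        (fun A => (commonNbrs G A).card ≤ r - 1)).biUnion
        (fun A => ((commonNbrs G A).powersetCard t).image (fun B => (A, B))) := by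
      intro AB hAB
      obtain ⟨hABY, hle⟩ := Finset.mem_filter.mp hAB
      obtain ⟨hprod, hadj⟩ := Finset.mem_filter.mp hABY
      rw [Finset.mem_product, Finset.mem_powersetCard, Finset.mem_powersetCard] at hprod
      rw [Finset.mem_biUnion]
      refine ⟨AB.1, Finset.mem_filter.mpr ⟨Finset.mem_powersetCard.mpr hprod.1, hle⟩, ?_⟩
      rw [Finset.mem_image]
      refine ⟨AB.2, ?_, rfl⟩
      rw [Finset.mem_powersetCard]
      refine ⟨?_, hprod.2.2⟩
      intro b hb
      rw [mem_commonNbrs]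
      intro a ha
      exact hadj a ha b hb
    refine le_trans (Finset.card_le_card hsub) ?_
    refine le_trans Finset.card_biUnion_le ?_
    refine le_trans (Finset.sum_le_card_nsmul _ _ ((r - 1).choose t) ?_) ?_
    · intro A hA
      refine le_trans Finset.card_image_le ?_
      rw [Finset.card_powersetCard]
      exact Nat.choose_le_choose t (Finset.mem_filter.mp hA).2
    · rw [smul_eq_mul]
      refine Nat.mul_le_mul_right _ ?_
      refine le_trans (Finset.card_filter_le _ _) ?_
      rw [Finset.card_powersetCard, Finset.card_univ, Fintype.card_fin]
  -- bad part
  have hbad : Yb.card ≤ n * d * d.choose t := by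
    rcases Finset.eq_empty_or_nonempty Yb with he | hne
    · simp [he]
    obtain ⟨AB₀, hAB₀⟩ := hne
    have hA₀2 : AB₀.1.card = 2 := by
      have := (Finset.mem_filter.mp (Finset.mem_filter.mp hAB₀).1).1
      rw [Finset.mem_product, Finset.mem_powersetCard] at this
      exact this.1.2
    obtain ⟨x₀, _⟩ := Finset.card_pos.mp (by omega : 0 < AB₀.1.card)
    set g : Finset (Fin n) × Finset (Fin n) → Fin n × Finset (Fin n) × Fin n :=
      fun AB =>
        if G.degree (WithBot.unbotD x₀ AB.1.min) ≤ d then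
          (WithBot.unbotD x₀ AB.1.min, AB.2, WithTop.untopD x₀ AB.1.max)
        else
          (WithTop.untopD x₀ AB.1.max, AB.2, WithBot.unbotD x₀ AB.1.min) with hg
    set W : Finset (Fin n × Finset (Fin n) × Fin n) :=
      (univ : Finset (Fin n)).biUnion (fun u =>
        (((univ : Finset (Fin n)).powersetCard t).filter
          (fun B => B ⊆ G.neighborFinset u ∧ G.degree u ≤ d)).biUnion
          (fun B => ((commonNbrs G B).erase u).image (fun v => (u, B, v)))) with hW
    have key : ∀ AB ∈ Yb, (g AB).2.1 = AB.2 ∧ AB.1 = {(g AB).1, (g AB).2.2} ∧ g AB ∈ W := by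
      intro AB hAB
      obtain ⟨hABY, hcn⟩ := Finset.mem_filter.mp hAB
      obtain ⟨hprod, hadj⟩ := Finset.mem_filter.mp hABY
      rw [Finset.mem_product, Finset.mem_powersetCard, Finset.mem_powersetCard] at hprod
      have hA2 : AB.1.card = 2 := hprod.1.2
      have hAne : AB.1.Nonempty := Finset.card_pos.mp (by omega)
      set x := AB.1.min' hAne with hx
      set y := AB.1.max' hAne with hy
      have hxmem : x ∈ AB.1 := Finset.min'_mem _ _
      have hymem : y ∈ AB.1 := Finset.max'_mem _ _
      have hxy : x ≠ y := ne_of_lt (Finset.min'_lt_max'_of_card _ (by omega))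
      have hAeq : AB.1 = {x, y} := by
        refine (Finset.eq_of_subset_of_card_le ?_ ?_).symm
        · intro z hz
          rcases Finset.mem_insert.mp hz with h | h
          · exact h ▸ hxmem
          · exact (Finset.mem_singleton.mp h) ▸ hymem
        · rw [Finset.card_pair hxy, hA2]
      have hminx : WithBot.unbotD x₀ AB.1.min = x := by
        rw [← Finset.coe_min' hAne]; exact WithBot.unbotD_coe x₀ _
      have hmaxy : WithTop.untopD x₀ AB.1.max = y := by
        rw [← Finset.coe_max' hAne]; exact WithTop.untopD_coe x₀ _
      have hrle : r ≤ (commonNbrs G {x, y}).card := by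
        rw [← hAeq]; omega
      have hlowxy := hlow x y hxy hrle
      -- common facts
      have hBsub : ∀ u ∈ AB.1, AB.2 ⊆ G.neighborFinset u := by
        intro u hu b hb
        rw [SimpleGraph.mem_neighborFinset]
        exact hadj u hu b hb
      have hvCN : ∀ v ∈ AB.1, v ∈ commonNbrs G AB.2 := by
        intro v hv
        rw [mem_commonNbrs]
        intro b hb
        exact (hadj v hv b hb).symm
      have hWmem : ∀ u v : Fin n, u ∈ AB.1 → v ∈ AB.1 → u ≠ v → G.degree u ≤ d →
          (u, AB.2, v) ∈ W := by
        intro u v hu hv huvne hud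
        rw [hW, Finset.mem_biUnion]
        refine ⟨u, Finset.mem_univ _, ?_⟩
        rw [Finset.mem_biUnion]
        refine ⟨AB.2, ?_, ?_⟩
        · rw [Finset.mem_filter, Finset.mem_powersetCard]
          exact ⟨⟨Finset.subset_univ _, hprod.2.2⟩, hBsub u hu, hud⟩
        · rw [Finset.mem_image]
          exact ⟨v, Finset.mem_erase.mpr ⟨(Ne.symm huvne), hvCN v hv⟩, rfl⟩
      by_cases hcase : G.degree (WithBot.unbotD x₀ AB.1.min) ≤ d
      · have hgeq : g AB = (x, AB.2, y) := by
          rw [hg]; simp only [if_pos hcase, hminx, hmaxy]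
        rw [hgeq]
        refine ⟨rfl, by simpa using hAeq, ?_⟩
        exact hWmem x y hxmem hymem hxy (hminx ▸ hcase)
      · have hgeq : g AB = (y, AB.2, x) := by
          rw [hg]; simp only [if_neg hcase, hminx, hmaxy]
        rw [hgeq]
        have hyd : G.degree y ≤ d := by
          rcases hlowxy with h | h
          · exact absurd (hminx ▸ h) hcase
          · exact h
        refine ⟨rfl, ?_, ?_⟩
        · rw [hAeq, Finset.pair_comm]
        · exact hWmem y x hymem hxmem (Ne.symm hxy) hyd
    have hinj : Set.InjOn g ↑Yb := by
      intro AB hAB AB' hAB' hgg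
      obtain ⟨h1, h2, _⟩ := key AB hAB
      obtain ⟨h1', h2', _⟩ := key AB' hAB'
      have : AB.1 = AB'.1 := by rw [h2, h2', hgg]
      have hB : AB.2 = AB'.2 := by rw [← h1, ← h1', hgg]
      exact Prod.ext this hB
    have hYbW : Yb.card ≤ W.card :=
      Finset.card_le_card_of_injOn g (fun AB hAB => (key AB hAB).2.2) hinj
    refine le_trans hYbW ?_
    have hWcard : W.card ≤ n * (d.choose t * d) := by
      refine le_trans Finset.card_biUnion_le ?_
      refine le_trans (Finset.sum_le_card_nsmul _ _ (d.choose t * d) ?_) ?_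
      · intro u _
        refine le_trans Finset.card_biUnion_le ?_
        refine le_trans (Finset.sum_le_card_nsmul _ _ d ?_) ?_
        · intro B hB
          rw [Finset.mem_filter, Finset.mem_powersetCard] at hB
          obtain ⟨⟨_, hBt⟩, hBN, _⟩ := hB
          refine le_trans Finset.card_image_le ?_
          obtain ⟨s₁, hs₁, s₂, hs₂, hs12⟩ := Finset.one_lt_card.mp (by omega : 1 < B.card)
          have hsub : (commonNbrs G B).erase u ⊆ commonNbrs G {s₁, s₂} := by
            intro z hz
            have hz' := mem_commonNbrs.mp (Finset.mem_of_mem_erase hz)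
            rw [mem_commonNbrs]
            intro a ha
            rcases Finset.mem_insert.mp ha with h | h
            · exact hz' a (h ▸ hs₁)
            · exact hz' a ((Finset.mem_singleton.mp h) ▸ hs₂)
          exact le_trans (Finset.card_le_card hsub) (hpair s₁ s₂ hs12)
        · rw [smul_eq_mul]
          refine Nat.mul_le_mul_right _ ?_
          rcases Finset.eq_empty_or_nonempty ((((univ : Finset (Fin n)).powersetCard t).filter
            (fun B => B ⊆ G.neighborFinset u ∧ G.degree u ≤ d))) with he | hne'
          · rw [he]; simp
          · obtain ⟨B₀, hB₀⟩ := hne'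
            have hud : G.degree u ≤ d := (Finset.mem_filter.mp hB₀).2.2
            have hsub : (((univ : Finset (Fin n)).powersetCard t).filter
                (fun B => B ⊆ G.neighborFinset u ∧ G.degree u ≤ d)) ⊆
                (G.neighborFinset u).powersetCard t := by
              intro B hB
              rw [Finset.mem_filter, Finset.mem_powersetCard] at hB
              rw [Finset.mem_powersetCard]
              exact ⟨hB.2.1, hB.1.2⟩
            refine le_trans (Finset.card_le_card hsub) ?_
            rw [Finset.card_powersetCard]
            exact Nat.choose_le_choose t hud
      · rw [smul_eq_mul, Finset.card_univ, Fintype.card_fin]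
    refine le_trans hWcard ?_
    rw [Nat.mul_assoc]
    exact Nat.mul_le_mul_left _ (by rw [Nat.mul_comm])
  omega
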